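/- Let u : ℝ² → ℝ² be continuously differentiable with div u = 0 everywhere, and let S : ℝ² → ℝ² be twice continuously differentiable with compact support. Then ∫_{ℝ²} ((u·∇)S)(x) · ΔS(x) dx = - ∫_{ℝ²} Σ_{k,ℓ=1}^{2} (∂_ℓ u_k)(x) (∂_k S(x) · ∂_ℓ S(x)) dx, where ∂_k S = (∂_k S₁, ∂_k S₂) and · denotes the Euclidean inner product in ℝ². -/

import Mathlib

open MeasureTheory

/-- Partial derivative in direction `i` of a scalar function on `ℝ²`. -/
noncomputable def pd (i : Fin 2) (f : (Fin 2 → ℝ) → ℝ) (x : Fin 2 → ℝ) : ℝ :=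
  fderiv ℝ f x (Pi.single i 1)

/-- Laplacian of a scalar function on `ℝ²`. -/
noncomputable def lap (f : (Fin 2 → ℝ) → ℝ) (x : Fin 2 → ℝ) : ℝ :=
  pd 0 (pd 0 f) x + pd 1 (pd 1 f) x

lemma contDiff_pd {n m : WithTop ℕ∞} {f : (Fin 2 → ℝ) → ℝ} (hf : ContDiff ℝ n f)
    (hm : m + 1 ≤ n) (k : Fin 2) : ContDiff ℝ m (pd k f) :=
  (hf.fderiv_right hm).clm_apply contDiff_const

lemma hcs_pd {f : (Fin 2 → ℝ) → ℝ} (hf : HasCompactSupport f) (k : Fin 2) :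
    HasCompactSupport (pd k f) :=
  hf.fderiv_apply ℝ (Pi.single k 1)

lemma pd_mul {F G : (Fin 2 → ℝ) → ℝ} {x : Fin 2 → ℝ} (hF : DifferentiableAt ℝ F x)
    (hG : DifferentiableAt ℝ G x) (l : Fin 2) :
    pd l (fun y => F y * G y) x = pd l F x * G x + F x * pd l G x := by
  unfold pd
  rw [fderiv_fun_mul hF hG]
  simp [mul_comm]
  ring


lemma key_ibp {f : (Fin 2 → ℝ) → ℝ} (hf : ContDiff ℝ 1 f) (hc : HasCompactSupport f)
    (i : Fin 2) : ∫ x : Fin 2 → ℝ, pd i f x = 0 := by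
  obtain ⟨R, hR0, hR⟩ : ∃ R : ℝ, 0 < R ∧ tsupport f ⊆ Metric.ball 0 R := by
    obtain ⟨R, hR⟩ := hc.isCompact.isBounded.subset_ball 0
    exact ⟨max R 1, lt_of_lt_of_le one_pos (le_max_right _ _),
      hR.trans (Metric.ball_subset_ball (le_max_left _ _))⟩
  set a : Fin 2 → ℝ := fun _ => -R with ha
  set b : Fin 2 → ℝ := fun _ => R with hb
  have hball_icc : Metric.ball (0 : Fin 2 → ℝ) R ⊆ Set.Icc a b := by
    intro y hy
    simp only [Metric.mem_ball, dist_zero_right] at hy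
    constructor <;> intro j <;>
      have := (abs_le.1 ((norm_le_pi_norm y j).trans hy.le))
    · exact this.1
    · exact this.2
  have hout : ∀ x, x ∉ Set.Icc a b → pd i f x = 0 := by
    intro x hx
    have hxt : x ∉ tsupport f := fun h => hx (hball_icc (hR h))
    simp only [pd]
    rw [fderiv_of_notMem_tsupport ℝ hxt]
    rfl
  have hle : a ≤ b := fun j => by simp [ha, hb]; linarith
  have key := MeasureTheory.integral_divergence_of_hasFDerivAt_off_countable'
    (n := 1) a b hle (fun j => if j = i then f else 0)
    (fun j x => if j = i then fderiv ℝ f x else 0) ∅ Set.countable_empty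
    (fun j => by
      by_cases h : j = i <;> simp [h]
      exacts [hf.continuous.continuousOn, continuousOn_const])
    (fun x _ j => by
      by_cases h : j = i
      · simpa [h] using (hf.differentiable one_ne_zero x).hasFDerivAt
      · simp only [h, ↓reduceIte]; exact hasFDerivAt_const (0:ℝ) x)
    (by
      have : (fun x : Fin 2 → ℝ => ∑ j, (if j = i then fderiv ℝ f x else 0) (Pi.single j 1))
          = pd i f := by
        funext x
        fin_cases i <;> simp [Fin.sum_univ_two, pd]
      rw [this]
      exact (((contDiff_pd (m := 0) hf (by norm_num) i).continuous).integrable_of_hasCompactSupport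
        (hcs_pd hc i)).integrableOn)
  have hfun : ∀ x : Fin 2 → ℝ,
      (∑ j, (if j = i then fderiv ℝ f x else 0) (Pi.single j 1)) = pd i f x := by
    intro x
    fin_cases i <;> simp [Fin.sum_univ_two, pd]
  have key2 : (∫ x in Set.Icc a b, pd i f x) =
      ∑ j : Fin 2, ((∫ x in Set.Icc (a ∘ j.succAbove) (b ∘ j.succAbove),
          (if j = i then f else 0) (j.insertNth (b j) x)) -
        ∫ x in Set.Icc (a ∘ j.succAbove) (b ∘ j.succAbove),
          (if j = i then f else 0) (j.insertNth (a j) x)) := by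
    rw [← key]
    exact integral_congr_ae (Filter.Eventually.of_forall fun x => (hfun x).symm)
  have hzero : ∀ (j : Fin 2) (c : ℝ), |c| = R → ∀ y : Fin 1 → ℝ,
      (if j = i then f else 0) (j.insertNth c y) = 0 := by
    intro j c hcR y
    by_cases h : j = i
    · subst h
      simp only [if_pos rfl]
      apply image_eq_zero_of_notMem_tsupport
      intro hmem
      have h1 := hR hmem
      simp only [Metric.mem_ball, dist_zero_right] at h1
      have h2 : |c| ≤ ‖(j.insertNth c y : Fin 2 → ℝ)‖ := by
        have h3 := norm_le_pi_norm (j.insertNth c y : Fin 2 → ℝ) j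
        simpa [Fin.insertNth_apply_same] using h3
      rw [hcR] at h2
      linarith
    · simp [h]
  rw [← setIntegral_eq_integral_of_forall_compl_eq_zero hout, key2]
  apply Finset.sum_eq_zero
  intro j _
  have e1 : (∫ x in Set.Icc (a ∘ j.succAbove) (b ∘ j.succAbove),
      (if j = i then f else 0) (j.insertNth (b j) x)) = 0 := by
    rw [show (fun x : Fin 1 → ℝ => (if j = i then f else 0) (j.insertNth (b j) x))
        = fun _ => (0:ℝ) from funext fun x => hzero j (b j) (by simp [hb, abs_of_pos hR0]) x]
    simp
  have e2 : (∫ x in Set.Icc (a ∘ j.succAbove) (b ∘ j.succAbove),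
      (if j = i then f else 0) (j.insertNth (a j) x)) = 0 := by
    rw [show (fun x : Fin 1 → ℝ => (if j = i then f else 0) (j.insertNth (a j) x))
        = fun _ => (0:ℝ) from funext fun x => hzero j (a j) (by simp [ha, abs_of_pos hR0]) x]
    simp
  rw [e1, e2, sub_zero]

lemma ibp_mul {F G : (Fin 2 → ℝ) → ℝ} (hF : ContDiff ℝ 1 F) (hG : ContDiff ℝ 1 G)
    (hGc : HasCompactSupport G) (l : Fin 2) :
    ∫ x : Fin 2 → ℝ, pd l F x * G x = - ∫ x : Fin 2 → ℝ, F x * pd l G x := by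
  have hFG : ContDiff ℝ 1 fun x => F x * G x := hF.mul hG
  have h1 : HasCompactSupport fun x => F x * G x := hGc.mul_left
  have h0 := key_ibp hFG h1 l
  have i1 : Integrable (fun x => pd l F x * G x) :=
    ((contDiff_pd (m := 0) hF (by norm_num) l).continuous.mul
      hG.continuous).integrable_of_hasCompactSupport hGc.mul_left
  have i2 : Integrable (fun x => F x * pd l G x) :=
    (hF.continuous.mul (contDiff_pd (m := 0) hG (by norm_num)
      l).continuous).integrable_of_hasCompactSupport (hcs_pd hGc l).mul_left
  have hpt : ∀ x, pd l (fun y => F y * G y) x = pd l F x * G x + F x * pd l G x :=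
    fun x => pd_mul (hF.differentiable one_ne_zero x) (hG.differentiable one_ne_zero x) l
  rw [integral_congr_ae (Filter.Eventually.of_forall hpt), integral_add i1 i2] at h0
  linarith

lemma pd_pd {f : (Fin 2 → ℝ) → ℝ} (hf : ContDiff ℝ 2 f) (k l : Fin 2) (x : Fin 2 → ℝ) :
    pd k (pd l f) x = fderiv ℝ (fderiv ℝ f) x (Pi.single k 1) (Pi.single l 1) := by
  have hdf : HasFDerivAt (fderiv ℝ f) (fderiv ℝ (fderiv ℝ f) x) x :=
    (((hf.fderiv_right (m := 1) (by norm_num)).differentiable one_ne_zero) x).hasFDerivAt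
  have h2 := hdf.clm_apply (hasFDerivAt_const (Pi.single l 1 : Fin 2 → ℝ) x)
  have h3 := h2.fderiv
  show fderiv ℝ (fun y => fderiv ℝ f y (Pi.single l 1)) x (Pi.single k 1) = _
  rw [h3]
  simp

lemma pd_comm {f : (Fin 2 → ℝ) → ℝ} (hf : ContDiff ℝ 2 f) (k l : Fin 2) (x : Fin 2 → ℝ) :
    pd k (pd l f) x = pd l (pd k f) x := by
  rw [pd_pd hf k l, pd_pd hf l k]
  exact (hf.contDiffAt.isSymmSndFDerivAt (by simp)).eq _ _

/-- `∫ ((u·∇)S)·ΔS = -∫ Σ_{k,ℓ} ∂_ℓu_k (∂_kS · ∂_ℓS)` for divergence-free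
`C¹` `u` and compactly supported `C²` `S`. -/
theorem convective_against_laplacian
    (u S : (Fin 2 → ℝ) → (Fin 2 → ℝ))
    (hu : ContDiff ℝ 1 u)
    (hdiv : ∀ x, pd 0 (fun y => u y 0) x + pd 1 (fun y => u y 1) x = 0)
    (hS : ContDiff ℝ 2 S) (hSc : HasCompactSupport S) :
    (∫ x : Fin 2 → ℝ,
        ∑ i, (∑ k, u x k * pd k (fun y => S y i) x) * lap (fun y => S y i) x)
    = - ∫ x : Fin 2 → ℝ,
        ∑ k, ∑ l, pd l (fun y => u y k) x
          * (∑ i, pd k (fun y => S y i) x * pd l (fun y => S y i) x) := by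
  have hfC : ∀ i, ContDiff ℝ 2 fun y => S y i := contDiff_pi.mp hS
  have huC : ∀ k, ContDiff ℝ 1 fun y => u y k := contDiff_pi.mp hu
  have hfc : ∀ i, HasCompactSupport fun y => S y i := fun i =>
    hSc.comp_left (g := fun v : Fin 2 → ℝ => v i) rfl
  have hpdfC1 : ∀ i k, ContDiff ℝ 1 (pd k fun y => S y i) := fun i k =>
    contDiff_pd (m := 1) (hfC i) (by norm_num) k
  have hpdfC0 : ∀ i k l, Continuous (pd l (pd k fun y => S y i)) := fun i k l =>
    (contDiff_pd (m := 0) (hpdfC1 i k) (by norm_num) l).continuous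
  have hpdfc : ∀ i k, HasCompactSupport (pd k fun y => S y i) := fun i k =>
    hcs_pd (hfc i) k
  have hpduC0 : ∀ k l, Continuous (pd l fun y => u y k) := fun k l =>
    (contDiff_pd (m := 0) (huC k) (by norm_num) l).continuous
  -- the A-terms
  have iA : ∀ i l k, Integrable fun x =>
      pd l (fun y => u y k) x * pd k (fun y => S y i) x * pd l (fun y => S y i) x := by
    intro i l k
    exact (((hpduC0 k l).mul (hpdfC1 i k).continuous).mul
      (hpdfC1 i l).continuous).integrable_of_hasCompactSupport (hpdfc i l).mul_left
  -- the B-terms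
  have iB : ∀ i l k, Integrable fun x =>
      u x k * pd l (pd k fun y => S y i) x * pd l (fun y => S y i) x := by
    intro i l k
    exact (((huC k).continuous.mul (hpdfC0 i k l)).mul
      (hpdfC1 i l).continuous).integrable_of_hasCompactSupport (hpdfc i l).mul_left
  -- the T-terms
  have iT : ∀ i l k, Integrable fun x =>
      u x k * pd k (fun y => S y i) x * pd l (pd l fun y => S y i) x := by
    intro i l k
    exact (((huC k).continuous.mul (hpdfC1 i k).continuous).mul
      (hpdfC0 i l l)).integrable_of_hasCompactSupport ((hpdfc i k).mul_left).mul_right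
  -- step 2+3 : ∫ T i l k = - ∫ A i l k - ∫ B i l k
  have step23 : ∀ i l k,
      (∫ x : Fin 2 → ℝ, u x k * pd k (fun y => S y i) x * pd l (pd l fun y => S y i) x)
      = - (∫ x : Fin 2 → ℝ,
            pd l (fun y => u y k) x * pd k (fun y => S y i) x * pd l (fun y => S y i) x)
        - ∫ x : Fin 2 → ℝ,
            u x k * pd l (pd k fun y => S y i) x * pd l (fun y => S y i) x := by
    intro i l k
    have hF : ContDiff ℝ 1 fun x => u x k * pd k (fun y => S y i) x :=
      (huC k).mul (hpdfC1 i k)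
    have hibp := ibp_mul hF (hpdfC1 i l) (hpdfc i l) l
    -- hibp : ∫ pd l F * pd l f_i = - ∫ F * pd l (pd l f_i)
    have hpt : ∀ x, pd l (fun y => u y k * pd k (fun y' => S y' i) y) x
        * pd l (fun y => S y i) x
        = pd l (fun y => u y k) x * pd k (fun y => S y i) x * pd l (fun y => S y i) x
          + u x k * pd l (pd k fun y => S y i) x * pd l (fun y => S y i) x := by
      intro x
      rw [pd_mul ((huC k).differentiable one_ne_zero x) ((hpdfC1 i k).differentiable one_ne_zero x) l]
      ring
    rw [integral_congr_ae (Filter.Eventually.of_forall hpt),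
      integral_add (iA i l k) (iB i l k)] at hibp
    linarith
  -- step 4 : ∑ k, ∫ B i l k = 0
  have step4 : ∀ i l,
      (∑ k, ∫ x : Fin 2 → ℝ,
        u x k * pd l (pd k fun y => S y i) x * pd l (fun y => S y i) x) = 0 := by
    intro i l
    set g : (Fin 2 → ℝ) → ℝ := pd l (fun y => S y i) with hg
    have hgC : ContDiff ℝ 1 g := hpdfC1 i l
    have hgc : HasCompactSupport g := hpdfc i l
    have iAk : ∀ k, Integrable fun x => pd k (fun y => u y k) x * (g x * g x) := by
      intro k
      exact ((hpduC0 k k).mul (hgC.continuous.mul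
        hgC.continuous)).integrable_of_hasCompactSupport hgc.mul_left.mul_left
    have hB : ∀ k, (∫ x : Fin 2 → ℝ, u x k * pd l (pd k fun y => S y i) x * g x)
        = -(1/2) * ∫ x : Fin 2 → ℝ, pd k (fun y => u y k) x * (g x * g x) := by
      intro k
      have hukh : ContDiff ℝ 1 fun x => u x k * (g x * g x) := (huC k).mul (hgC.mul hgC)
      have hukhc : HasCompactSupport fun x => u x k * (g x * g x) :=
        HasCompactSupport.mul_left (hgc.mul_left)
      have h0 := key_ibp hukh hukhc k
      have hpt : ∀ x, pd k (fun y => u y k * (g y * g y)) x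
          = pd k (fun y => u y k) x * (g x * g x)
            + 2 * (u x k * pd k g x * g x) := by
        intro x
        rw [pd_mul ((huC k).differentiable one_ne_zero x) ((hgC.mul hgC).differentiable one_ne_zero x) k,
          pd_mul (hgC.differentiable one_ne_zero x) (hgC.differentiable one_ne_zero x) k]
        ring
      have iBk : Integrable fun x => u x k * pd k g x * g x := by
        exact (((huC k).continuous.mul
          (contDiff_pd (m := 0) hgC (by norm_num) k).continuous).mul
          hgC.continuous).integrable_of_hasCompactSupport hgc.mul_left
      rw [integral_congr_ae (Filter.Eventually.of_forall hpt),
        integral_add (iAk k) (iBk.const_mul 2), integral_const_mul] at h0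
      have hcomm : ∀ x, u x k * pd l (pd k fun y => S y i) x * g x
          = u x k * pd k g x * g x := by
        intro x
        rw [hg, pd_comm (hfC i) l k x]
      rw [integral_congr_ae (Filter.Eventually.of_forall hcomm)]
      linarith
    rw [Fin.sum_univ_two, hB 0, hB 1]
    have hsum : (∫ x : Fin 2 → ℝ, pd 0 (fun y => u y 0) x * (g x * g x))
        + (∫ x : Fin 2 → ℝ, pd 1 (fun y => u y 1) x * (g x * g x)) = 0 := by
      rw [← integral_add (iAk 0) (iAk 1)]
      have hz : ∀ x : Fin 2 → ℝ, pd 0 (fun y => u y 0) x * (g x * g x)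
          + pd 1 (fun y => u y 1) x * (g x * g x) = 0 := by
        intro x
        rw [← add_mul, hdiv x, zero_mul]
      rw [integral_congr_ae (Filter.Eventually.of_forall hz), integral_zero]
    linarith
  -- step 1 : LHS as iterated sum of integrals
  have step1 : (∫ x : Fin 2 → ℝ,
        ∑ i, (∑ k, u x k * pd k (fun y => S y i) x) * lap (fun y => S y i) x)
      = ∑ i, ∑ l, ∑ k, ∫ x : Fin 2 → ℝ,
          u x k * pd k (fun y => S y i) x * pd l (pd l fun y => S y i) x := by
    have e1 : ∀ x : Fin 2 → ℝ,
        (∑ i, (∑ k, u x k * pd k (fun y => S y i) x) * lap (fun y => S y i) x)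
        = ∑ i, ∑ l, ∑ k, u x k * pd k (fun y => S y i) x
            * pd l (pd l fun y => S y i) x := by
      intro x
      simp only [lap, Fin.sum_univ_two]
      ring
    rw [integral_congr_ae (Filter.Eventually.of_forall e1)]
    rw [integral_finset_sum _ fun i _ => integrable_finset_sum _ fun l _ =>
      integrable_finset_sum _ fun k _ => iT i l k]
    refine Finset.sum_congr rfl fun i _ => ?_
    rw [integral_finset_sum _ fun l _ => integrable_finset_sum _ fun k _ => iT i l k]
    refine Finset.sum_congr rfl fun l _ => ?_
    rw [integral_finset_sum _ fun k _ => iT i l k]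
  -- step 5 : RHS as iterated sum of integrals
  have step5 : (∫ x : Fin 2 → ℝ,
        ∑ k, ∑ l, pd l (fun y => u y k) x
          * (∑ i, pd k (fun y => S y i) x * pd l (fun y => S y i) x))
      = ∑ k, ∑ l, ∑ i, ∫ x : Fin 2 → ℝ,
          pd l (fun y => u y k) x * pd k (fun y => S y i) x
            * pd l (fun y => S y i) x := by
    have e2 : ∀ x : Fin 2 → ℝ,
        (∑ k, ∑ l, pd l (fun y => u y k) x
          * (∑ i, pd k (fun y => S y i) x * pd l (fun y => S y i) x))
        = ∑ k, ∑ l, ∑ i, pd l (fun y => u y k) x * pd k (fun y => S y i) x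
            * pd l (fun y => S y i) x := by
      intro x
      simp only [Finset.mul_sum, mul_assoc]
    rw [integral_congr_ae (Filter.Eventually.of_forall e2)]
    rw [integral_finset_sum _ fun k _ => integrable_finset_sum _ fun l _ =>
      integrable_finset_sum _ fun i _ => iA i l k]
    refine Finset.sum_congr rfl fun k _ => ?_
    rw [integral_finset_sum _ fun l _ => integrable_finset_sum _ fun i _ => iA i l k]
    refine Finset.sum_congr rfl fun l _ => ?_
    rw [integral_finset_sum _ fun i _ => iA i l k]
  rw [step1, step5]
  have expand : ∀ i l, (∑ k, ∫ x : Fin 2 → ℝ,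
      u x k * pd k (fun y => S y i) x * pd l (pd l fun y => S y i) x)
      = - ∑ k, ∫ x : Fin 2 → ℝ,
          pd l (fun y => u y k) x * pd k (fun y => S y i) x
            * pd l (fun y => S y i) x := by
    intro i l
    have h4 := step4 i l
    rw [Fin.sum_univ_two] at h4 ⊢
    rw [step23 i l 0, step23 i l 1, Fin.sum_univ_two]
    linarith
  simp only [expand, Fin.sum_univ_two]
  ring
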